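/- Cayley identity for the determinant: for every positive integer n and every natural number s, one has det(∂X)·(det X)^{s+1} = (∏_{i=1}^{n}(s+i))·(det X)^{s} in the polynomial ring ℚ[x_{ij}]. -/

import Mathlib

open MvPolynomial

/-- The partial-derivative operator `∂_{ij}` as a linear endomorphism of
`ℚ[x_{ij} : 1 ≤ i,j ≤ n]`. -/
noncomputable def pd0 {n : ℕ} (v : Fin n × Fin n) :
    Module.End ℚ (MvPolynomial (Fin n × Fin n) ℚ) :=
  (pderiv v).toLinearMap

/-- The operator `det(∂X) = Σ_{σ ∈ S_n} sgn(σ) ∏_i ∂_{i,σ(i)}` (the operators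
`∂_{i,σ(i)}` pairwise commute, so the order of composition is immaterial). -/
noncomputable def detOp0 (n : ℕ) : Module.End ℚ (MvPolynomial (Fin n × Fin n) ℚ) :=
  ∑ σ : Equiv.Perm (Fin n),
    (Equiv.Perm.sign σ : ℤ) • (List.ofFn fun i => pd0 (i, σ i)).prod

/-- The generic `n × n` matrix `X = (x_{ij})` over `ℚ[x_{ij}]`. -/
noncomputable def Xmat0 (n : ℕ) :
    Matrix (Fin n) (Fin n) (MvPolynomial (Fin n × Fin n) ℚ) :=
  fun i j => X (i, j)

namespace CayleyAux

variable {n : ℕ}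

/-- Shorthand for the polynomial ring. -/
abbrev Rp (n : ℕ) := MvPolynomial (Fin n × Fin n) ℚ

/-- unit row vector `e_j`. -/
noncomputable def urow (j : Fin n) : Fin n → Rp n := fun j' => if j = j' then 1 else 0

/-- The generic matrix with the rows in `S` replaced by unit rows `e_{γ i}`. -/
noncomputable def NU (γ : Fin n → Fin n) (S : Finset (Fin n)) : Matrix (Fin n) (Fin n) (Rp n) :=
  fun i j => if i ∈ S then urow (γ i) j else X (i, j)

/-- Determinant of `NU`. -/
noncomputable def dU (γ : Fin n → Fin n) (S : Finset (Fin n)) : Rp n := (NU γ S).det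

lemma NU_row_mem {γ : Fin n → Fin n} {S : Finset (Fin n)} {i : Fin n} (h : i ∈ S) :
    NU γ S i = urow (γ i) := by
  funext j; simp [NU, h]

lemma NU_row_not_mem {γ : Fin n → Fin n} {S : Finset (Fin n)} {i : Fin n} (h : i ∉ S) :
    NU γ S i = fun j => X (i, j) := by
  funext j; simp [NU, h]

lemma dU_congr {γ γ' : Fin n → Fin n} {S : Finset (Fin n)}
    (h : ∀ i ∈ S, γ i = γ' i) : dU γ S = dU γ' S := by
  unfold dU
  congr 1
  funext i j
  by_cases hi : i ∈ S
  · simp only [NU, if_pos hi, h i hi]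
  · simp only [NU, if_neg hi]

lemma dU_empty (γ : Fin n → Fin n) : dU γ ∅ = (Xmat0 n).det := by
  unfold dU
  congr 1

lemma dU_one_univ : dU (fun i => i) (Finset.univ : Finset (Fin n)) = 1 := by
  unfold dU
  have : NU (fun i : Fin n => i) Finset.univ = 1 := by
    funext i j
    simp [NU, urow, Matrix.one_apply]
  rw [this, Matrix.det_one]

/-- derivative of a finite product vanishes if it vanishes on each factor -/
lemma pderiv_prod_zero (v : Fin n × Fin n) {ι : Type*} (s : Finset ι) (g : ι → Rp n)
    (h : ∀ a ∈ s, pderiv v (g a) = 0) : pderiv v (∏ a ∈ s, g a) = 0 := by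
  classical
  induction s using Finset.induction_on with
  | empty => simp [pderiv_one]
  | @insert a s' hns ih =>
      rw [Finset.prod_insert hns, pderiv_mul, ih (fun b hb => h b (Finset.mem_insert_of_mem hb)),
        h a (Finset.mem_insert_self a s'), zero_mul, mul_zero, add_zero]

lemma pderiv_det_zero (v : Fin n × Fin n) (M : Matrix (Fin n) (Fin n) (Rp n))
    (h : ∀ i j, pderiv v (M i j) = 0) : pderiv v M.det = 0 := by
  rw [Matrix.det_apply']
  rw [map_sum]
  refine Finset.sum_eq_zero fun σ _ => ?_
  have hz : pderiv v (∏ i, M (σ i) i) = 0 :=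
    pderiv_prod_zero v Finset.univ _ (fun i _ => h (σ i) i)
  have : ((Equiv.Perm.sign σ : ℤ) : Rp n) * ∏ i, M (σ i) i
      = ((Equiv.Perm.sign σ : ℤ) : ℚ) • ∏ i, M (σ i) i := by
    rw [MvPolynomial.smul_eq_C_mul]
    norm_cast
  rw [show (↑↑(Equiv.Perm.sign σ) * ∏ i, M (σ i) i : Rp n)
      = ((Equiv.Perm.sign σ : ℤ) : ℚ) • ∏ i, M (σ i) i from this, Derivation.map_smul, hz,
    smul_zero]

/-- multilinearity of det in one row, for finite sums -/
lemma det_updateRow_finset_sum {ι : Type*} (M : Matrix (Fin n) (Fin n) (Rp n)) (i0 : Fin n)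
    (s : Finset ι) (c : ι → Rp n) (u : ι → Fin n → Rp n) :
    (M.updateRow i0 (fun j => ∑ t ∈ s, c t * u t j)).det
      = ∑ t ∈ s, c t * (M.updateRow i0 (u t)).det := by
  classical
  induction s using Finset.induction_on with
  | empty =>
      simp only [Finset.sum_empty]
      rw [show (fun _ : Fin n => (0 : Rp n)) = (0 : Fin n → Rp n) from rfl]
      exact Matrix.det_eq_zero_of_row_eq_zero i0 (fun j => by simp)
  | @insert a s' hns ih =>
      simp only [Finset.sum_insert hns]
      rw [show (fun j => c a * u a j + ∑ t ∈ s', c t * u t j)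
            = (c a • u a + fun j => ∑ t ∈ s', c t * u t j) from rfl]
      rw [Matrix.det_updateRow_add, Matrix.det_updateRow_smul, ih]

/-- expansion of `dU` along an X-row -/
lemma dU_expand {γ : Fin n → Fin n} {S : Finset (Fin n)} {i0 : Fin n} (h : i0 ∉ S) :
    dU γ S = ∑ j, X (i0, j) * dU (Function.update γ i0 j) (insert i0 S) := by
  have hM : ∀ j : Fin n,
      (NU γ S).updateRow i0 (urow j) = NU (Function.update γ i0 j) (insert i0 S) := by
    intro j
    funext i j'
    by_cases hi : i = i0
    · subst hi
      simp [Matrix.updateRow_self, NU, Function.update_self]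
    · simp only [Matrix.updateRow_ne hi, NU, Function.update_of_ne hi, Finset.mem_insert]
      have : (i = i0 ∨ i ∈ S) ↔ i ∈ S := by
        constructor
        · rintro (h1 | h1); · exact absurd h1 hi
          · exact h1
        · exact Or.inr
      simp [this]
  have hrow : (fun j' => ∑ j, X (i0, j) * urow j j') = NU γ S i0 := by
    funext j'
    rw [NU_row_not_mem h]
    simp [urow, mul_ite, mul_one, mul_zero, Finset.sum_ite_eq']
  have h1 : dU γ S = ((NU γ S).updateRow i0 (fun j' => ∑ j, X (i0, j) * urow j j')).det := by
    rw [hrow, Matrix.updateRow_eq_self]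
    rfl
  rw [h1, show (fun j' => ∑ j, X (i0, j) * urow j j')
      = (fun j' => ∑ j, X (i0, j) * urow j j') from rfl]
  rw [det_updateRow_finset_sum (M := NU γ S) i0 Finset.univ (fun j => X (i0, j)) urow]
  exact Finset.sum_congr rfl fun j _ => by rw [hM j]; rfl

lemma pderiv_dU_zero {γ : Fin n → Fin n} {S : Finset (Fin n)} {i0 : Fin n} (h : i0 ∈ S)
    (j : Fin n) : pderiv (i0, j) (dU γ S) = 0 := by
  refine pderiv_det_zero _ _ (fun i j' => ?_)
  by_cases hi : i ∈ S
  · rw [show NU γ S i j' = urow (γ i) j' from by simp [NU, hi]]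
    unfold urow
    split <;> simp [pderiv_one, pderiv_C]
  · have hne : i ≠ i0 := fun he => hi (he ▸ h)
    rw [show NU γ S i j' = X (i, j') from by simp [NU, hi]]
    exact pderiv_X_of_ne (by simp [Prod.ext_iff, hne])

/-- key derivative lemma -/
lemma pderiv_dU {γ : Fin n → Fin n} {S : Finset (Fin n)} {i0 : Fin n} (h : i0 ∉ S) (j : Fin n) :
    pderiv (i0, j) (dU γ S) = dU (Function.update γ i0 j) (insert i0 S) := by
  rw [dU_expand (γ := γ) (S := S) h]
  rw [map_sum]
  have hterm : ∀ j', pderiv (i0, j) (X (i0, j') * dU (Function.update γ i0 j') (insert i0 S))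
      = (if j = j' then dU (Function.update γ i0 j') (insert i0 S) else 0) := by
    intro j'
    rw [pderiv_mul, pderiv_dU_zero (Finset.mem_insert_self i0 S), mul_zero, add_zero]
    by_cases hj : (i0, j') = (i0, j)
    · have : j = j' := by simpa [Prod.ext_iff] using hj.symm
      simp [this, pderiv_X_self]
    · rw [pderiv_X_of_ne hj, zero_mul]
      have : ¬ j = j' := fun he => hj (by simp [he])
      simp [this]
  rw [Finset.sum_congr rfl (fun j' _ => hterm j')]
  simp

/-- derivative of the full determinant -/
lemma pderiv_f (γ : Fin n → Fin n) (i0 j : Fin n) :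
    pderiv (i0, j) ((Xmat0 n).det) = dU (Function.update γ i0 j) {i0} := by
  have := pderiv_dU (γ := γ) (S := (∅ : Finset (Fin n))) (i0 := i0) (Finset.notMem_empty i0) j
  rw [dU_empty] at this
  simpa using this

lemma pderiv_comm (u v : Fin n × Fin n) (p : Rp n) :
    pderiv u (pderiv v p) = pderiv v (pderiv u p) := by
  rcases eq_or_ne u v with rfl | huv
  · rfl
  · induction p using MvPolynomial.induction_on' with
    | add p q hp hq => simp only [map_add, hp, hq]
    | monomial s a =>
        simp only [pderiv_monomial]
        have hs : s - Finsupp.single v 1 - Finsupp.single u 1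
            = s - Finsupp.single u 1 - Finsupp.single v 1 := by
          ext k
          simp only [Finsupp.tsub_apply, Finsupp.single_apply]
          omega
        have h1 : (s - Finsupp.single v 1 : (Fin n × Fin n) →₀ ℕ) u = s u := by
          rw [Finsupp.tsub_apply, Finsupp.single_eq_of_ne huv, Nat.sub_zero]
        have h2 : (s - Finsupp.single u 1 : (Fin n × Fin n) →₀ ℕ) v = s v := by
          rw [Finsupp.tsub_apply, Finsupp.single_eq_of_ne (Ne.symm huv), Nat.sub_zero]
        rw [hs, h1, h2]
        congr 1
        ring

lemma pd0_commute (u v : Fin n × Fin n) : Commute (pd0 (n := n) u) (pd0 v) := by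
  apply LinearMap.ext
  intro p
  exact pderiv_comm u v p

/-- the (commuting) product of the operators `∂_{i, γ i}` over `i ∈ I`. -/
noncomputable def pdP (I : Finset (Fin n)) (γ : Fin n → Fin n) : Module.End ℚ (Rp n) :=
  I.noncommProd (fun i => pd0 (i, γ i)) (fun a _ b _ _ => pd0_commute _ _)

lemma pdP_empty (γ : Fin n → Fin n) : pdP (∅ : Finset (Fin n)) γ = 1 :=
  Finset.noncommProd_empty _ _

lemma pdP_insert {I : Finset (Fin n)} {i0 : Fin n} (h : i0 ∉ I) (γ : Fin n → Fin n) :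
    pdP (insert i0 I) γ = pd0 (i0, γ i0) * pdP I γ :=
  Finset.noncommProd_insert_of_notMem _ _ _ _ h

/-- permutations supported on `I` -/
def PermOn (I : Finset (Fin n)) : Finset (Equiv.Perm (Fin n)) :=
  Finset.univ.filter (fun π => ∀ i, i ∉ I → π i = i)

lemma mem_PermOn {I : Finset (Fin n)} {π : Equiv.Perm (Fin n)} :
    π ∈ PermOn I ↔ ∀ i, i ∉ I → π i = i := by
  simp [PermOn]

lemma PermOn_apply_mem {I : Finset (Fin n)} {π : Equiv.Perm (Fin n)} (h : π ∈ PermOn I)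
    {i : Fin n} (hi : i ∈ I) : π i ∈ I := by
  by_contra hc
  have h1 : π (π i) = π i := (mem_PermOn.1 h) (π i) hc
  have h2 : π i = i := π.injective h1
  exact hc (by rw [h2]; exact hi)

lemma PermOn_empty : PermOn (∅ : Finset (Fin n)) = {1} := by
  ext π
  simp only [mem_PermOn, Finset.mem_singleton]
  constructor
  · intro h
    ext i
    have := h i (Finset.notMem_empty i)
    simp [this]
  · intro h i _
    rw [h]
    rfl

lemma PermOn_univ : PermOn (Finset.univ : Finset (Fin n)) = Finset.univ := by
  ext π
  simp [mem_PermOn]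

lemma permOn_decomp (I : Finset (Fin n)) (i0 : Fin n) (hi0 : i0 ∈ I)
    (F : Equiv.Perm (Fin n) → Rp n) :
    ∑ π ∈ PermOn I, F π
      = ∑ t ∈ I, ∑ ρ ∈ PermOn (I.erase i0), F (Equiv.swap i0 t * ρ) := by
  have hP : ∑ t ∈ I, ∑ ρ ∈ PermOn (I.erase i0), F (Equiv.swap i0 t * ρ)
      = ∑ p ∈ I ×ˢ PermOn (I.erase i0), F (Equiv.swap i0 p.1 * p.2) := by
    rw [Finset.sum_product]
  rw [hP]
  refine Finset.sum_nbij' (fun π => (π i0, Equiv.swap i0 (π i0) * π))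
    (fun p => Equiv.swap i0 p.1 * p.2) ?_ ?_ ?_ ?_ ?_
  · -- maps PermOn I → product
    intro π hπ
    rw [Finset.mem_product]
    refine ⟨PermOn_apply_mem hπ hi0, ?_⟩
    rw [mem_PermOn]
    intro i hi
    by_cases hii : i = i0
    · rw [hii]
      simp only [Equiv.Perm.mul_apply]
      exact Equiv.swap_apply_right i0 (π i0)
    · have hiI : i ∉ I := fun hmem => hi (Finset.mem_erase.2 ⟨hii, hmem⟩)
      have hfix : π i = i := (mem_PermOn.1 hπ) i hiI
      simp only [Equiv.Perm.mul_apply, hfix]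
      have hit : i ≠ π i0 := by
        intro he
        have : π i0 = π i := by rw [← he, hfix]
        have : i0 = i := π.injective this
        exact hii this.symm
      rw [Equiv.swap_apply_of_ne_of_ne hii hit]
  · -- maps product → PermOn I
    intro p hp
    rw [Finset.mem_product] at hp
    rw [mem_PermOn]
    intro i hi
    have h1 : p.2 i = i := (mem_PermOn.1 hp.2) i (fun hmem => hi (Finset.mem_of_mem_erase hmem))
    simp only [Equiv.Perm.mul_apply, h1]
    exact Equiv.swap_apply_of_ne_of_ne (fun he => hi (he ▸ hi0)) (fun he => hi (he ▸ hp.1))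
  · -- left inverse
    intro π hπ
    simp only
    rw [← mul_assoc, Equiv.swap_mul_self, one_mul]
  · -- right inverse
    intro p hp
    rw [Finset.mem_product] at hp
    have hfix : p.2 i0 = i0 :=
      (mem_PermOn.1 hp.2) i0 (Finset.notMem_erase i0 I)
    have h1 : (Equiv.swap i0 p.1 * p.2) i0 = p.1 := by
      simp only [Equiv.Perm.mul_apply, hfix, Equiv.swap_apply_left]
    ext
    · simp only [h1]
    · simp only [h1, ← mul_assoc, Equiv.swap_mul_self, one_mul]
  · intro π hπ
    simp only
    rw [← mul_assoc, Equiv.swap_mul_self, one_mul]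

lemma swap_mem_of_mem {I : Finset (Fin n)} {i0 t i : Fin n} (hi0 : i0 ∈ I) (ht : t ∈ I)
    (hi : i ∈ I) : Equiv.swap i0 t i ∈ I := by
  rcases eq_or_ne i i0 with rfl | h1
  · rw [Equiv.swap_apply_left]; exact ht
  rcases eq_or_ne i t with rfl | h2
  · rw [Equiv.swap_apply_right]; exact hi0
  · rw [Equiv.swap_apply_of_ne_of_ne h1 h2]; exact hi

lemma dU_swap (σ : Equiv.Perm (Fin n)) {I : Finset (Fin n)} {i0 t : Fin n} (hi0 : i0 ∈ I)
    (ht : t ∈ I) (hne : t ≠ i0) :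
    dU ⇑(σ * Equiv.swap i0 t) I = - dU ⇑σ I := by
  have hsub : NU ⇑(σ * Equiv.swap i0 t) I = (NU ⇑σ I).submatrix (⇑(Equiv.swap i0 t)) id := by
    funext i j
    by_cases hi : i ∈ I
    · have h2 : Equiv.swap i0 t i ∈ I := swap_mem_of_mem hi0 ht hi
      simp [NU, Matrix.submatrix_apply, hi, h2, Equiv.Perm.mul_apply]
    · have h1 : i ≠ i0 := fun he => hi (he ▸ hi0)
      have h2 : i ≠ t := fun he => hi (he ▸ ht)
      have h3 : Equiv.swap i0 t i = i := Equiv.swap_apply_of_ne_of_ne h1 h2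
      simp [NU, Matrix.submatrix_apply, hi, h3]
  rw [dU, hsub, Matrix.det_permute, Equiv.Perm.sign_swap (Ne.symm hne)]
  show ((((-1 : ℤˣ) : ℤ) : Rp n)) * (NU (⇑σ) I).det = - dU (⇑σ) I
  push_cast
  rw [neg_one_mul]
  rfl

lemma row_cramer (A : Matrix (Fin n) (Fin n) (Rp n)) (b : Fin n → Rp n) (j : Fin n) :
    ∑ t, (A.updateRow t b).det * A t j = A.det * b j := by
  have h := congrFun (Matrix.mulVec_cramer A.transpose b) j
  simp only [Matrix.mulVec, dotProduct, Matrix.transpose_apply,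
    Matrix.cramer_transpose_apply, Matrix.det_transpose, Pi.smul_apply, smul_eq_mul] at h
  rw [← h]
  exact Finset.sum_congr rfl fun t _ => mul_comm _ _

lemma sylvester (σ : Equiv.Perm (Fin n)) (I : Finset (Fin n)) {i0 : Fin n} (hi0 : i0 ∈ I) :
    (Xmat0 n).det * dU ⇑σ I
      = ∑ t ∈ I, (if t = i0 then (1 : Rp n) else -1) *
          (dU ⇑(σ * Equiv.swap i0 t) {i0} * dU ⇑(σ * Equiv.swap i0 t) (I.erase i0)) := by
  classical
  set A := NU ⇑σ I with hA
  set b : Fin n → Rp n := fun j => X (i0, j) with hb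
  have key : ∑ t, (A.updateRow t b).det * ((Xmat0 n).updateRow i0 (A t)).det
      = A.det * (Xmat0 n).det := by
    have h1 : ((Xmat0 n).updateRow i0 (fun j => ∑ t, (A.updateRow t b).det * A t j)).det
        = ∑ t, (A.updateRow t b).det * ((Xmat0 n).updateRow i0 (A t)).det :=
      det_updateRow_finset_sum (Xmat0 n) i0 Finset.univ _ _
    have h2 : (fun j => ∑ t, (A.updateRow t b).det * A t j) = fun j => A.det * b j := by
      funext j; exact row_cramer A b j
    rw [h2] at h1
    rw [← h1]
    have h3 : (fun j => A.det * b j) = A.det • b := rfl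
    rw [h3, Matrix.det_updateRow_smul]
    have h4 : (Xmat0 n).updateRow i0 b = Xmat0 n := by
      have hbb : b = Xmat0 n i0 := rfl
      rw [hbb, Matrix.updateRow_eq_self]
    rw [h4]
  have hvanish : ∀ t ∈ (Finset.univ : Finset (Fin n)), t ∉ I →
      (A.updateRow t b).det * ((Xmat0 n).updateRow i0 (A t)).det = 0 := by
    intro t _ htI
    have hAt : A t = fun j => X (t, j) := NU_row_not_mem htI
    have htne : t ≠ i0 := fun he => htI (he ▸ hi0)
    have hz : ((Xmat0 n).updateRow i0 (A t)).det = 0 := by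
      refine Matrix.det_zero_of_row_eq htne ?_
      rw [Matrix.updateRow_ne htne, Matrix.updateRow_self, hAt]
      rfl
    rw [hz, mul_zero]
  have hterm : ∀ t ∈ I, (A.updateRow t b).det * ((Xmat0 n).updateRow i0 (A t)).det
      = (if t = i0 then (1 : Rp n) else -1) *
        (dU ⇑(σ * Equiv.swap i0 t) {i0} * dU ⇑(σ * Equiv.swap i0 t) (I.erase i0)) := by
    intro t ht
    have hp1 : ((Xmat0 n).updateRow i0 (A t)).det = dU ⇑(σ * Equiv.swap i0 t) {i0} := by
      have hAt : A t = urow (σ t) := NU_row_mem ht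
      have hmat : (Xmat0 n).updateRow i0 (urow (σ t)) = NU ⇑(σ * Equiv.swap i0 t) {i0} := by
        funext i j
        by_cases hi : i = i0
        · rw [hi, Matrix.updateRow_self]
          have hv : (σ * Equiv.swap i0 t) i0 = σ t := by
            simp [Equiv.Perm.mul_apply, Equiv.swap_apply_left]
          simp [NU, hv]
        · rw [Matrix.updateRow_ne hi]
          simp [NU, Finset.mem_singleton, hi, Xmat0]
      rw [hAt, hmat]
      rfl
    rcases eq_or_ne t i0 with rfl | hne
    · have hmat : A.updateRow t b = NU ⇑σ (I.erase t) := by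
        funext i j
        by_cases hi : i = t
        · rw [hi, Matrix.updateRow_self]
          simp [NU, Finset.mem_erase, hb]
        · rw [Matrix.updateRow_ne hi]
          by_cases hiI : i ∈ I
          · simp [NU, hA, Finset.mem_erase, hi, hiI]
          · simp [NU, hA, Finset.mem_erase, hi, hiI]
      have hsw : σ * Equiv.swap t t = σ := by
        rw [Equiv.swap_self, ← Equiv.Perm.one_def, mul_one]
      rw [hp1, hsw, hmat, if_pos rfl, one_mul, mul_comm]
      rfl
    · have hmat : A.updateRow t b
          = (NU ⇑(σ * Equiv.swap i0 t) (I.erase i0)).submatrix (⇑(Equiv.swap i0 t)) id := by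
        funext i j
        by_cases hit : i = t
        · rw [hit, Matrix.updateRow_self, Matrix.submatrix_apply, Equiv.swap_apply_right]
          have hni : i0 ∉ I.erase i0 := Finset.notMem_erase i0 I
          simp [NU, hni, hb]
        · rw [Matrix.updateRow_ne hit, Matrix.submatrix_apply, id]
          by_cases hii0 : i = i0
          · rw [hii0, Equiv.swap_apply_left]
            have htmem : t ∈ I.erase i0 := Finset.mem_erase.2 ⟨hne, ht⟩
            have hv : (σ * Equiv.swap i0 t) t = σ i0 := by
              simp [Equiv.Perm.mul_apply, Equiv.swap_apply_right]
            simp [NU, hA, htmem, hv, hi0]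
          · rw [Equiv.swap_apply_of_ne_of_ne hii0 hit]
            by_cases hiI : i ∈ I
            · have himem : i ∈ I.erase i0 := Finset.mem_erase.2 ⟨hii0, hiI⟩
              have hv : (σ * Equiv.swap i0 t) i = σ i := by
                simp [Equiv.Perm.mul_apply, Equiv.swap_apply_of_ne_of_ne hii0 hit]
              simp [NU, hA, himem, hiI, hv]
            · have himem : i ∉ I.erase i0 := fun hmem => hiI (Finset.mem_of_mem_erase hmem)
              simp [NU, hA, himem, hiI]
      have hdet : (A.updateRow t b).det = - dU ⇑(σ * Equiv.swap i0 t) (I.erase i0) := by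
        rw [hmat, Matrix.det_permute, Equiv.Perm.sign_swap (fun h => hne h.symm)]
        show ((((-1 : ℤˣ) : ℤ) : Rp n)) * _ = _
        push_cast
        rw [neg_one_mul]
        rfl
      rw [hdet, hp1, if_neg hne]
      ring
  calc (Xmat0 n).det * dU ⇑σ I = A.det * (Xmat0 n).det := by rw [mul_comm]; rfl
    _ = ∑ t, (A.updateRow t b).det * ((Xmat0 n).updateRow i0 (A t)).det := key.symm
    _ = ∑ t ∈ I, (A.updateRow t b).det * ((Xmat0 n).updateRow i0 (A t)).det :=
        (Finset.sum_subset (Finset.subset_univ I) hvanish).symm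
    _ = _ := Finset.sum_congr rfl hterm

lemma smul_int_cast (z : ℤ) (p : Rp n) : ((z : ℤ) : ℚ) • p = (z : Rp n) * p := by
  rw [MvPolynomial.smul_eq_C_mul, map_intCast]

lemma nat_cast_mul_eq_smul (m : ℕ) (p : Rp n) : (m : Rp n) * p = (m : ℚ) • p := by
  rw [MvPolynomial.smul_eq_C_mul, map_natCast]

lemma sgn_swap_smul (i0 t : Fin n) (z : Rp n) :
    ((Equiv.Perm.sign (Equiv.swap i0 t) : ℤ) : ℚ) • z
      = (if t = i0 then (1 : Rp n) else -1) * z := by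
  rcases eq_or_ne t i0 with rfl | hne
  · rw [Equiv.swap_self]
    rw [if_pos rfl, one_mul]
    have : Equiv.Perm.sign (Equiv.refl (Fin n) : Equiv.Perm (Fin n)) = 1 := by
      rw [← Equiv.Perm.one_def, map_one]
    rw [this]
    norm_num
  · rw [Equiv.Perm.sign_swap (fun h => hne h.symm), if_neg hne]
    push_cast
    rw [neg_one_mul, neg_smul, one_smul]

lemma deriv_term (m : ℕ) (σt : Equiv.Perm (Fin n)) (I' : Finset (Fin n)) {i0 : Fin n}
    (hiI' : i0 ∉ I') :
    pderiv (i0, σt i0) ((Xmat0 n).det ^ m * dU ⇑σt I')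
      = (m : Rp n) * (Xmat0 n).det ^ (m - 1) * dU ⇑σt {i0} * dU ⇑σt I'
        + (Xmat0 n).det ^ m * dU ⇑σt (insert i0 I') := by
  have hupd : Function.update (⇑σt) i0 (σt i0) = ⇑σt := Function.update_eq_self i0 (⇑σt)
  rw [pderiv_mul, pderiv_pow, pderiv_dU hiI' (σt i0), hupd]
  rw [pderiv_f (⇑σt) i0 (σt i0), hupd]

lemma pow_absorb (m : ℕ) (z : Rp n) :
    (m : Rp n) * (Xmat0 n).det ^ (m - 1) * ((Xmat0 n).det * z)
      = (m : Rp n) * ((Xmat0 n).det ^ m * z) := by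
  cases m with
  | zero => push_cast; ring
  | succ k =>
      have : (Xmat0 n).det ^ (k + 1 - 1) * (Xmat0 n).det = (Xmat0 n).det ^ (k + 1) := by
        rw [Nat.add_sub_cancel, pow_succ]
      calc (↑(k+1) : Rp n) * (Xmat0 n).det ^ (k+1-1) * ((Xmat0 n).det * z)
          = (↑(k+1) : Rp n) * ((Xmat0 n).det ^ (k+1-1) * (Xmat0 n).det * z) := by ring
        _ = (↑(k+1) : Rp n) * ((Xmat0 n).det ^ (k+1) * z) := by rw [this]

theorem AM2 (I : Finset (Fin n)) : ∀ (m : ℕ) (σ : Equiv.Perm (Fin n)),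
    ∑ π ∈ PermOn I,
        ((Equiv.Perm.sign π : ℤ) : ℚ) • pdP I ⇑(σ * π) ((Xmat0 n).det ^ (m + 1))
      = (∏ t ∈ Finset.Icc 1 I.card, ((m : ℚ) + t)) • ((Xmat0 n).det ^ m * dU ⇑σ I) := by
  induction I using Finset.strongInduction with
  | _ I ih =>
    intro m σ
    rcases Finset.eq_empty_or_nonempty I with rfl | ⟨i0, hi0⟩
    · rw [PermOn_empty, Finset.sum_singleton, Finset.card_empty]
      rw [show Finset.Icc 1 0 = (∅ : Finset ℕ) from rfl, Finset.prod_empty, one_smul]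
      rw [mul_one, pdP_empty, dU_empty]
      simp [Module.End.one_apply, pow_succ]
    · set I' := I.erase i0 with hI'
      have hiI' : i0 ∉ I' := Finset.notMem_erase i0 I
      have hins : insert i0 I' = I := Finset.insert_erase hi0
      have hss : I' ⊂ I := Finset.erase_ssubset hi0
      have hcard : I.card = I'.card + 1 := by
        rw [hI', Finset.card_erase_of_mem hi0]
        have : 1 ≤ I.card := Finset.card_pos.2 ⟨i0, hi0⟩
        omega
      set c' : ℚ := ∏ t ∈ Finset.Icc 1 I'.card, ((m : ℚ) + t) with hc'
      rw [permOn_decomp I i0 hi0]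
      have hINNER : ∀ t ∈ I,
          (∑ ρ ∈ PermOn I',
            ((Equiv.Perm.sign (Equiv.swap i0 t * ρ) : ℤ) : ℚ) •
              pdP I ⇑(σ * (Equiv.swap i0 t * ρ)) ((Xmat0 n).det ^ (m + 1)))
          = ((Equiv.Perm.sign (Equiv.swap i0 t) : ℤ) : ℚ) • (c' • (
              (m : Rp n) * (Xmat0 n).det ^ (m - 1) * dU ⇑(σ * Equiv.swap i0 t) {i0}
                  * dU ⇑(σ * Equiv.swap i0 t) I'
              + (Xmat0 n).det ^ m * dU ⇑(σ * Equiv.swap i0 t) I)) := by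
        intro t ht
        set σt := σ * Equiv.swap i0 t with hσt
        have hσti0 : σt i0 = σ t := by
          rw [hσt]
          simp [Equiv.Perm.mul_apply, Equiv.swap_apply_left]
        have hterm : ∀ ρ ∈ PermOn I',
            ((Equiv.Perm.sign (Equiv.swap i0 t * ρ) : ℤ) : ℚ) •
              pdP I ⇑(σ * (Equiv.swap i0 t * ρ)) ((Xmat0 n).det ^ (m + 1))
            = ((Equiv.Perm.sign (Equiv.swap i0 t) : ℤ) : ℚ) •
                (((Equiv.Perm.sign ρ : ℤ) : ℚ) •
                  pd0 (i0, σ t) (pdP I' ⇑(σt * ρ) ((Xmat0 n).det ^ (m + 1)))) := by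
          intro ρ hρmem
          have h0 : ρ i0 = i0 := (mem_PermOn.1 hρmem) i0 hiI'
          have h1 : σ * (Equiv.swap i0 t * ρ) = σt * ρ := by rw [hσt, mul_assoc]
          have h2 : (σt * ρ) i0 = σ t := by
            rw [Equiv.Perm.mul_apply, h0, hσti0]
          rw [h1, ← hins, pdP_insert hiI', Module.End.mul_apply, h2]
          rw [map_mul]
          push_cast
          rw [mul_smul]
        rw [Finset.sum_congr rfl hterm, ← Finset.smul_sum]
        congr 1
        have hpull : ∑ ρ ∈ PermOn I',
            ((Equiv.Perm.sign ρ : ℤ) : ℚ) •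
              pd0 (i0, σ t) (pdP I' ⇑(σt * ρ) ((Xmat0 n).det ^ (m + 1)))
            = pd0 (i0, σ t) (∑ ρ ∈ PermOn I',
                ((Equiv.Perm.sign ρ : ℤ) : ℚ) • pdP I' ⇑(σt * ρ) ((Xmat0 n).det ^ (m + 1))) := by
          rw [map_sum]
          exact Finset.sum_congr rfl fun ρ _ => (map_smul (pd0 (i0, σ t)) _ _).symm
        rw [hpull, ih I' hss m σt, map_smul]
        congr 1
        have := deriv_term (n := n) m σt I' hiI'
        rw [hσti0] at this
        rw [show (pd0 (i0, σ t)) ((Xmat0 n).det ^ m * dU (⇑σt) I')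
            = pderiv (i0, σ t) ((Xmat0 n).det ^ m * dU (⇑σt) I') from rfl, this, hins]
      rw [Finset.sum_congr rfl hINNER]
      have hswap : ∀ t, ((Equiv.Perm.sign (Equiv.swap i0 t) : ℤ) : ℚ) • (c' • (
              (m : Rp n) * (Xmat0 n).det ^ (m - 1) * dU ⇑(σ * Equiv.swap i0 t) {i0}
                  * dU ⇑(σ * Equiv.swap i0 t) I'
              + (Xmat0 n).det ^ m * dU ⇑(σ * Equiv.swap i0 t) I))
          = c' • (
              (m : Rp n) * (Xmat0 n).det ^ (m - 1) *
                ((if t = i0 then (1 : Rp n) else -1) *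
                  (dU ⇑(σ * Equiv.swap i0 t) {i0} * dU ⇑(σ * Equiv.swap i0 t) I'))
              + ((Equiv.Perm.sign (Equiv.swap i0 t) : ℤ) : ℚ) •
                  ((Xmat0 n).det ^ m * dU ⇑(σ * Equiv.swap i0 t) I)) := by
        intro t
        rw [smul_comm]
        congr 1
        rw [smul_add]
        congr 1
        rw [sgn_swap_smul]
        ring
      rw [Finset.sum_congr rfl (fun t _ => hswap t), ← Finset.smul_sum]
      rw [Finset.sum_add_distrib]
      have hsumA : ∑ t ∈ I, (m : Rp n) * (Xmat0 n).det ^ (m - 1) *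
            ((if t = i0 then (1 : Rp n) else -1) *
              (dU ⇑(σ * Equiv.swap i0 t) {i0} * dU ⇑(σ * Equiv.swap i0 t) I'))
          = (m : Rp n) * ((Xmat0 n).det ^ m * dU ⇑σ I) := by
        rw [← Finset.mul_sum, ← sylvester σ I hi0, pow_absorb]
      have hsumB : ∑ t ∈ I, ((Equiv.Perm.sign (Equiv.swap i0 t) : ℤ) : ℚ) •
            ((Xmat0 n).det ^ m * dU ⇑(σ * Equiv.swap i0 t) I)
          = (I.card : ℚ) • ((Xmat0 n).det ^ m * dU ⇑σ I) := by
        have hconst : ∀ t ∈ I, ((Equiv.Perm.sign (Equiv.swap i0 t) : ℤ) : ℚ) •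
              ((Xmat0 n).det ^ m * dU ⇑(σ * Equiv.swap i0 t) I)
            = (Xmat0 n).det ^ m * dU ⇑σ I := by
          intro t ht
          rcases eq_or_ne t i0 with rfl | hne
          · have hsw : σ * Equiv.swap t t = σ := by
              rw [Equiv.swap_self, ← Equiv.Perm.one_def, mul_one]
            rw [hsw, sgn_swap_smul, if_pos rfl, one_mul]
          · rw [dU_swap σ hi0 ht hne, sgn_swap_smul, if_neg hne]
            ring
        rw [Finset.sum_congr rfl hconst, Finset.sum_const]
        exact (Nat.cast_smul_eq_nsmul ℚ _ _).symm
      rw [hsumA, hsumB, nat_cast_mul_eq_smul, ← add_smul, smul_smul]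
      congr 1
      rw [hcard]
      rw [Finset.prod_Icc_succ_top (Nat.succ_le_succ (Nat.zero_le _))]

lemma list_prod_eq_pdP (σ : Equiv.Perm (Fin n)) :
    (List.ofFn fun i => pd0 (i, σ i)).prod = pdP Finset.univ ⇑σ := by
  rw [List.ofFn_eq_map]
  symm
  rw [pdP]
  erw [Finset.noncommProd_congr (Fin.univ_def n)
    (fun x _ => rfl : ∀ x ∈ (⟨↑(List.finRange n), List.nodup_finRange n⟩ : Finset (Fin n)),
      (fun i => pd0 (i, σ i)) x = (fun i => pd0 (i, σ i)) x)]
  exact Multiset.noncommProd_coe (List.map (fun i => pd0 (i, σ i)) (List.finRange n)) _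

end CayleyAux

theorem cayley_identity (n : ℕ) (hn : 0 < n) (s : ℕ) :
    detOp0 n ((Xmat0 n).det ^ (s + 1)) =
      (∏ i ∈ Finset.Icc 1 n, ((s : ℚ) + i)) • (Xmat0 n).det ^ s := by
  have h := CayleyAux.AM2 (n := n) Finset.univ s 1
  rw [CayleyAux.PermOn_univ] at h
  have hone : ⇑(1 : Equiv.Perm (Fin n)) = fun i : Fin n => i := rfl
  rw [show CayleyAux.dU (n := n) (⇑(1 : Equiv.Perm (Fin n))) Finset.univ = 1 from by
      rw [hone]; exact CayleyAux.dU_one_univ] at h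
  simp only [one_mul, mul_one, Finset.card_univ, Fintype.card_fin] at h
  rw [detOp0, LinearMap.sum_apply, ← h]
  refine Finset.sum_congr rfl fun σ _ => ?_
  rw [LinearMap.smul_apply, CayleyAux.list_prod_eq_pdP]
  rw [← Int.cast_smul_eq_zsmul ℚ]
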